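/- Let (C, E, s) be an extriangulated category, I ⊆ X full additive subcategories with I strongly covariantly finite in X (every X-object admits an inflation into I which is a left I-approximation). If E^I(I, X) = 0, then the functor ⟨1⟩ : X/[I] → X⟨1⟩/[I], sending X to the cone of a left I-approximation inflation, is an equivalence of categories. -/

import Mathlib

/-!
STATEMENT 19: with E^I(I, X) = 0, the shift ⟨1⟩ : X/[I] ⥤ X⟨1⟩/[I] is an equivalence.
-/

set_option linter.unusedSectionVars false

open CategoryTheory CategoryTheory.Limits Opposite

universe v u

variable (C : Type u) [Category.{v} C] [Preadditive C] [HasZeroObject C] [HasBinaryBiproducts C]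

/-- An extriangulated category structure on `C` (Nakaoka–Palu): an additive bifunctor
`E : Cᵒᵖ × C ⥤ Ab` together with an additive realization of extensions by conflations,
subject to the axioms (ET1)–(ET4) and their duals.  The realization is encoded by the
predicate `conf f g δ` expressing that `X ⟶ Y ⟶ Z` realizes `δ ∈ E(Z, X)`. -/
structure ETStruct where
  /-- the extension bifunctor (ET1) -/
  E : Cᵒᵖ ⥤ C ⥤ AddCommGrpCat.{v}
  /-- `E` is additive in the contravariant variable -/
  additive_op : E.Additive
  /-- `E` is additive in the covariant variable -/
  additive : ∀ Z : Cᵒᵖ, (E.obj Z).Additive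
  /-- `conf f g δ` : the sequence `f, g` realizes the extension `δ` (it is an s-conflation) -/
  conf : ∀ ⦃X Y Z : C⦄, (X ⟶ Y) → (Y ⟶ Z) → ((E.obj (op Z)).obj X) → Prop
  /-- every extension is realized by some conflation (ET2) -/
  exists_real : ∀ ⦃X Z : C⦄ (δ : (E.obj (op Z)).obj X),
      ∃ (Y : C) (f : X ⟶ Y) (g : Y ⟶ Z), conf f g δ
  comp_zero : ∀ ⦃X Y Z : C⦄ ⦃f : X ⟶ Y⦄ ⦃g : Y ⟶ Z⦄ ⦃δ : (E.obj (op Z)).obj X⦄,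
      conf f g δ → f ≫ g = 0
  /-- realizations are well defined up to equivalence of three-term sequences -/
  conf_iso : ∀ ⦃X Y Y' Z : C⦄ ⦃f : X ⟶ Y⦄ ⦃g : Y ⟶ Z⦄ ⦃δ : (E.obj (op Z)).obj X⦄
      (e : Y ≅ Y'), conf f g δ → conf (f ≫ e.hom) (e.inv ≫ g) δ
  /-- the realization is additive: `0` is realized by the split conflation -/
  conf_zero : ∀ (X Z : C), conf (biprod.inl : X ⟶ X ⊞ Z) (biprod.snd : X ⊞ Z ⟶ Z)
      (0 : (E.obj (op Z)).obj X)
  /-- conversely, a conflation realizing `0` splits -/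
  split_of_zero : ∀ ⦃X Y Z : C⦄ ⦃f : X ⟶ Y⦄ ⦃g : Y ⟶ Z⦄,
      conf f g (0 : (E.obj (op Z)).obj X) → ∃ s : Z ⟶ Y, s ≫ g = 𝟙 Z
  /-- (ET3) -/
  et3 : ∀ ⦃X Y Z X' Y' Z' : C⦄ ⦃f : X ⟶ Y⦄ ⦃g : Y ⟶ Z⦄ ⦃δ : (E.obj (op Z)).obj X⦄
      ⦃f' : X' ⟶ Y'⦄ ⦃g' : Y' ⟶ Z'⦄ ⦃δ' : (E.obj (op Z')).obj X'⦄
      (a : X ⟶ X') (b : Y ⟶ Y'), conf f g δ → conf f' g' δ' → f ≫ b = a ≫ f' →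
      ∃ c : Z ⟶ Z', g ≫ c = b ≫ g' ∧
        (E.map c.op).app X' δ' = ((E.obj (op Z)).map a) δ
  /-- (ET3)ᵒᵖ -/
  et3op : ∀ ⦃X Y Z X' Y' Z' : C⦄ ⦃f : X ⟶ Y⦄ ⦃g : Y ⟶ Z⦄ ⦃δ : (E.obj (op Z)).obj X⦄
      ⦃f' : X' ⟶ Y'⦄ ⦃g' : Y' ⟶ Z'⦄ ⦃δ' : (E.obj (op Z')).obj X'⦄
      (b : Y ⟶ Y') (c : Z ⟶ Z'), conf f g δ → conf f' g' δ' → g ≫ c = b ≫ g' →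
      ∃ a : X ⟶ X', f ≫ b = a ≫ f' ∧
        (E.map c.op).app X' δ' = ((E.obj (op Z)).map a) δ
  /-- (ET4) -/
  et4 : ∀ ⦃X Y Z Cc Dd : C⦄ ⦃f : X ⟶ Y⦄ ⦃f' : Y ⟶ Cc⦄ ⦃δ : (E.obj (op Cc)).obj X⦄
      ⦃g : Y ⟶ Z⦄ ⦃g' : Z ⟶ Dd⦄ ⦃ε : (E.obj (op Dd)).obj Y⦄,
      conf f f' δ → conf g g' ε →
      ∃ (Ee : C) (h' : Z ⟶ Ee) (δ' : (E.obj (op Ee)).obj X) (c : Cc ⟶ Ee) (d : Ee ⟶ Dd),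
        conf (f ≫ g) h' δ' ∧ conf c d (((E.obj (op Dd)).map f') ε) ∧
        f' ≫ c = g ≫ h' ∧ h' ≫ d = g' ∧ (E.map c.op).app X δ' = δ
  /-- long-exact-sequence property: `δ` pulled back along `h` vanishes iff `h` lifts -/
  pull_zero_iff : ∀ ⦃X Y Z : C⦄ ⦃f : X ⟶ Y⦄ ⦃g : Y ⟶ Z⦄ ⦃δ : (E.obj (op Z)).obj X⦄,
      conf f g δ → ∀ ⦃W : C⦄ (h : W ⟶ Z),
        ((E.map h.op).app X δ = 0 ↔ ∃ k : W ⟶ Y, k ≫ g = h)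
  /-- long-exact-sequence property: `δ` pushed forward along `h` vanishes iff `h` extends -/
  push_zero_iff : ∀ ⦃X Y Z : C⦄ ⦃f : X ⟶ Y⦄ ⦃g : Y ⟶ Z⦄ ⦃δ : (E.obj (op Z)).obj X⦄,
      conf f g δ → ∀ ⦃W : C⦄ (h : X ⟶ W),
        (((E.obj (op Z)).map h) δ = 0 ↔ ∃ k : Y ⟶ W, f ≫ k = h)

namespace ETStruct

variable {C}
variable (T : ETStruct C)

/-- The group of `E`-extensions of `Z` by `X`. -/
abbrev ext (Z X : C) : Type v := (T.E.obj (op Z)).obj X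

/-- Push-forward `a · δ` of an extension along `a : X ⟶ X'`. -/
def push {X X' Z : C} (a : X ⟶ X') (δ : T.ext Z X) : T.ext Z X' :=
  ((T.E.obj (op Z)).map a) δ

/-- Pull-back `δ · b` of an extension along `b : Z' ⟶ Z`. -/
def pull {Z' Z X : C} (b : Z' ⟶ Z) (δ : T.ext Z X) : T.ext Z' X :=
  ((T.E.map b.op).app X) δ

/-- `δ ∈ E_I(Z, X)`: `δ` pulls back to zero from every object of `I`. -/
def memDown (I : Set C) {Z X : C} (δ : T.ext Z X) : Prop :=
  ∀ ⦃W : C⦄, W ∈ I → ∀ f : W ⟶ Z, T.pull f δ = 0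

/-- `δ ∈ E^I(Z, X)`: `δ` pushes forward to zero into every object of `I`. -/
def memUp (I : Set C) {Z X : C} (δ : T.ext Z X) : Prop :=
  ∀ ⦃W : C⦄, W ∈ I → ∀ g : X ⟶ W, T.push g δ = 0

end ETStruct

/-- `f : d ⟶ X` is a right `D`-approximation. -/
def RightApprox (D : Set C) {d X : C} (f : d ⟶ X) : Prop :=
  ∀ ⦃d' : C⦄, d' ∈ D → ∀ g : d' ⟶ X, ∃ h : d' ⟶ d, h ≫ f = g

/-- `f : X ⟶ d` is a left `D`-approximation. -/
def LeftApprox (D : Set C) {X d : C} (f : X ⟶ d) : Prop :=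
  ∀ ⦃d' : C⦄, d' ∈ D → ∀ g : X ⟶ d', ∃ h : d ⟶ d', f ≫ h = g

def ClosedSummands (D : Set C) : Prop :=
  ∀ ⦃X Y : C⦄, X ∈ D → ∀ (i : Y ⟶ X) (p : X ⟶ Y), i ≫ p = 𝟙 Y → Y ∈ D

variable {C}

namespace ETStruct

variable (T : ETStruct C)

/-- `I` is strongly contravariantly finite in `Xc`: every `X ∈ Xc` admits a deflation
from an object of `I` which is a right `I`-approximation. -/
def StronglyContraFinite (I Xc : Set C) : Prop :=
  ∀ ⦃X : C⦄, X ∈ Xc → ∃ W ∈ I, ∃ p : W ⟶ X, RightApprox C I p ∧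
    ∃ (X' : C) (i : X' ⟶ W) (δ : T.ext X X'), T.conf i p δ

/-- `I` is strongly covariantly finite in `Xc`: every `X ∈ Xc` admits an inflation
into an object of `I` which is a left `I`-approximation. -/
def StronglyCovFinite (I Xc : Set C) : Prop :=
  ∀ ⦃X : C⦄, X ∈ Xc → ∃ W ∈ I, ∃ i : X ⟶ W, LeftApprox C I i ∧
    ∃ (Z : C) (p : W ⟶ Z) (δ : T.ext Z X), T.conf i p δ

/-- `Cone_P(A, B)`: objects `Z` admitting a conflation `A' ⟶ B' ⟶ Z` whose extension
class satisfies `P` (e.g. lies in `E^I` or `E_I`), with `A' ∈ A` and `B' ∈ B`. -/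
def coneRel (P : ∀ ⦃Z X : C⦄, T.ext Z X → Prop) (A B : Set C) : Set C :=
  {Z | ∃ (A' B' : C) (_ : A' ∈ A) (_ : B' ∈ B) (f : A' ⟶ B') (g : B' ⟶ Z)
      (δ : T.ext Z A'), T.conf f g δ ∧ P δ}

/-- `CoCone_P(A, B)`: objects `W` admitting a conflation `W ⟶ A' ⟶ B'` whose extension
class satisfies `P`, with `A' ∈ A` and `B' ∈ B`. -/
def coconeRel (P : ∀ ⦃Z X : C⦄, T.ext Z X → Prop) (A B : Set C) : Set C :=
  {W | ∃ (A' B' : C) (_ : A' ∈ A) (_ : B' ∈ B) (f : W ⟶ A') (g : A' ⟶ B')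
      (δ : T.ext B' W), T.conf f g δ ∧ P δ}

/-- `E^I(A, B) = 0` (`A` in the contravariant slot). -/
def vanishUp (I A B : Set C) : Prop :=
  ∀ ⦃Z X : C⦄, Z ∈ A → X ∈ B → ∀ δ : T.ext Z X, T.memUp I δ → δ = 0

/-- `E_I(A, B) = 0` (`A` in the contravariant slot). -/
def vanishDown (I A B : Set C) : Prop :=
  ∀ ⦃Z X : C⦄, Z ∈ A → X ∈ B → ∀ δ : T.ext Z X, T.memDown I δ → δ = 0

/-- `A` is closed under extensions in `(C, E^I)`. -/
def extClosedUp (I A : Set C) : Prop :=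
  ∀ ⦃X Y Z : C⦄ ⦃f : X ⟶ Y⦄ ⦃g : Y ⟶ Z⦄ ⦃δ : T.ext Z X⦄,
    T.conf f g δ → T.memUp I δ → X ∈ A → Z ∈ A → Y ∈ A

/-- `A` is closed under extensions in `(C, E_I)`. -/
def extClosedDown (I A : Set C) : Prop :=
  ∀ ⦃X Y Z : C⦄ ⦃f : X ⟶ Y⦄ ⦃g : Y ⟶ Z⦄ ⦃δ : T.ext Z X⦄,
    T.conf f g δ → T.memDown I δ → X ∈ A → Z ∈ A → Y ∈ A

/-- `Z⟨1⟩ = Cone_{E^I}(Z, I)`. -/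
def shiftPlus (I Zc : Set C) : Set C := T.coneRel (fun _ _ δ => T.memUp I δ) Zc I

/-- `Z⟨-1⟩ = CoCone_{E_I}(I, Z)`. -/
def shiftMinus (I Zc : Set C) : Set C := T.coconeRel (fun _ _ δ => T.memDown I δ) I Zc

/-- `Ũ = CoCone_{E^I}(Z, S)`. -/
def Utilde (I Sc Zc : Set C) : Set C := T.coconeRel (fun _ _ δ => T.memUp I δ) Zc Sc

/-- `T̃ = Cone_{E_I}(V, Z)`. -/
def Ttilde (I Zc Vc : Set C) : Set C := T.coneRel (fun _ _ δ => T.memDown I δ) Vc Zc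

end ETStruct

section IdealQuotient

/-- `f` factors through an object of `I`. -/
def FactorsThru (I : Set C) {X Y : C} (f : X ⟶ Y) : Prop :=
  ∃ (W : C) (_ : W ∈ I) (p : X ⟶ W) (q : W ⟶ Y), f = p ≫ q

/-- Morphisms of the full subcategory on `Z` are identified when their difference factors
through an object of `I`; the quotient is the additive quotient `Z/[I]`. -/
def idealRel (I Z : Set C) : HomRel (ObjectProperty.FullSubcategory (· ∈ Z)) :=
  fun {_ _} f g => FactorsThru I (f.hom - g.hom)

/-- The additive quotient `Z/[I]`. -/
abbrev IdealQuotient (I Z : Set C) := CategoryTheory.Quotient (idealRel I Z)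

variable {I : Set C}

theorem factorsThru_zero (hne : I.Nonempty) (X Y : C) : FactorsThru I (0 : X ⟶ Y) := by
  obtain ⟨W, hW⟩ := hne
  exact ⟨W, hW, 0, 0, by simp⟩

theorem factorsThru_neg {X Y : C} {f : X ⟶ Y} (h : FactorsThru I f) :
    FactorsThru I (-f) := by
  obtain ⟨W, hW, p, q, rfl⟩ := h
  exact ⟨W, hW, -p, q, by simp⟩

theorem factorsThru_add (hbi : ∀ ⦃W W' : C⦄, W ∈ I → W' ∈ I → (W ⊞ W') ∈ I)
    {X Y : C} {f g : X ⟶ Y} (hf : FactorsThru I f) (hg : FactorsThru I g) :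
    FactorsThru I (f + g) := by
  obtain ⟨W, hW, p, q, rfl⟩ := hf
  obtain ⟨W', hW', p', q', rfl⟩ := hg
  exact ⟨W ⊞ W', hbi hW hW', biprod.lift p p', biprod.desc q q', by simp⟩

theorem factorsThru_comp_left {X' X Y : C} (f : X' ⟶ X) {g : X ⟶ Y}
    (hg : FactorsThru I g) : FactorsThru I (f ≫ g) := by
  obtain ⟨W, hW, p, q, rfl⟩ := hg
  exact ⟨W, hW, f ≫ p, q, by simp⟩

theorem factorsThru_comp_right {X Y Y' : C} {f : X ⟶ Y} (g : Y ⟶ Y')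
    (hf : FactorsThru I f) : FactorsThru I (f ≫ g) := by
  obtain ⟨W, hW, p, q, rfl⟩ := hf
  exact ⟨W, hW, p, q ≫ g, by simp⟩

theorem idealRel_congruence (Z : Set C) (hne : I.Nonempty)
    (hbi : ∀ ⦃W W' : C⦄, W ∈ I → W' ∈ I → (W ⊞ W') ∈ I) :
    Congruence (idealRel I Z) := by
  refine { comp_left := ?_, comp_right := ?_, equivalence := ?_ }
  · intro X Y Z' f g g' h
    have := factorsThru_comp_left (I := I) f.hom h
    simpa [idealRel, Preadditive.comp_sub] using this
  · intro X Y Z' f f' g h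
    have := factorsThru_comp_right (I := I) g.hom h
    simpa [idealRel, Preadditive.sub_comp] using this
  · intro X Y
    constructor
    · intro f
      simpa [idealRel, sub_self] using factorsThru_zero hne X.obj Y.obj
    · intro f g h
      simpa [idealRel, neg_sub] using factorsThru_neg h
    · intro f g k hfg hgk
      have := factorsThru_add hbi hfg hgk
      simpa [idealRel, sub_add_sub_cancel] using this

/-- The preadditive structure on the ideal quotient `Z/[I]`. -/
def quotPreadditive (Z : Set C) (hne : I.Nonempty)
    (hbi : ∀ ⦃W W' : C⦄, W ∈ I → W' ∈ I → (W ⊞ W') ∈ I) :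
    Preadditive (IdealQuotient I Z) :=
  letI : Congruence (idealRel I Z) := idealRel_congruence Z hne hbi
  Quotient.preadditive (idealRel I Z) (by
    intro X Y f₁ f₂ g₁ g₂ h₁ h₂
    have := factorsThru_add hbi h₁ h₂
    change FactorsThru I ((f₁.hom + g₁.hom) - (f₂.hom + g₂.hom))
    simpa [idealRel, add_sub_add_comm] using this)

/-- The inclusion functor `A/[I] ⥤ B/[I]` for `A ⊆ B`. -/
def idealInclusion (I A B : Set C) (hAB : A ⊆ B) :
    IdealQuotient I A ⥤ IdealQuotient I B :=
  CategoryTheory.Quotient.lift _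
    (ObjectProperty.ιOfLE (P := (· ∈ A)) (P' := (· ∈ B)) (fun _ hX => hAB hX) ⋙ CategoryTheory.Quotient.functor (idealRel I B))
    (fun _ _ _ _ h => CategoryTheory.Quotient.sound _ h)

end IdealQuotient

namespace ETStruct

variable (T : ETStruct C)

/-- A premutation triple `(S, Z, V)`: conditions (MT1) and (MT2), with
`I = S ∩ Z = Z ∩ V` strongly functorially finite in `Z`. -/
structure IsPremutationTriple (Sc Zc Vc : Set C) : Prop where
  sumS : ClosedSummands C Sc
  sumZ : ClosedSummands C Zc
  sumV : ClosedSummands C Vc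
  /-- (MT1): `S ∩ Z = Z ∩ V` -/
  inter_eq : Sc ∩ Zc = Zc ∩ Vc
  /-- (MT1): `I ⊆ Z` is strongly contravariantly finite -/
  strong_contra : T.StronglyContraFinite (Sc ∩ Zc) Zc
  /-- (MT1): `I ⊆ Z` is strongly covariantly finite -/
  strong_cov : T.StronglyCovFinite (Sc ∩ Zc) Zc
  /-- (MT2)(i): `E^I(S, Z) = 0` -/
  mt2_i₁ : T.vanishUp (Sc ∩ Zc) Sc Zc
  /-- (MT2)(i): `E_I(S, Z⟨-1⟩) = 0` -/
  mt2_i₂ : T.vanishDown (Sc ∩ Zc) Sc (T.shiftMinus (Sc ∩ Zc) Zc)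
  /-- (MT2)(ii): `E_I(Z, V) = 0` -/
  mt2_ii₁ : T.vanishDown (Sc ∩ Zc) Zc Vc
  /-- (MT2)(ii): `E^I(Z⟨1⟩, V) = 0` -/
  mt2_ii₂ : T.vanishUp (Sc ∩ Zc) (T.shiftPlus (Sc ∩ Zc) Zc) Vc

/-- A mutation triple: a premutation triple which moreover satisfies (MT3). -/
structure IsMutationTriple (Sc Zc Vc : Set C) : Prop extends T.IsPremutationTriple Sc Zc Vc where
  /-- (MT3)(i): `Cone_{E^I}(Z, Z) ⊆ Ũ` -/
  mt3_i₁ : T.coneRel (fun _ _ δ => T.memUp (Sc ∩ Zc) δ) Zc Zc ⊆ T.Utilde (Sc ∩ Zc) Sc Zc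
  /-- (MT3)(i): `CoCone_{E_I}(Z, Z) ⊆ T̃` -/
  mt3_i₂ : T.coconeRel (fun _ _ δ => T.memDown (Sc ∩ Zc) δ) Zc Zc ⊆ T.Ttilde (Sc ∩ Zc) Zc Vc
  /-- (MT3)(ii): `S` is closed under `E^I`-extensions -/
  mt3_ii_S : T.extClosedUp (Sc ∩ Zc) Sc
  /-- (MT3)(ii): `Z` is closed under `E^I`-extensions -/
  mt3_ii_Zup : T.extClosedUp (Sc ∩ Zc) Zc
  /-- (MT3)(ii): `Z` is closed under `E_I`-extensions -/
  mt3_ii_Zdown : T.extClosedDown (Sc ∩ Zc) Zc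
  /-- (MT3)(ii): `V` is closed under `E_I`-extensions -/
  mt3_ii_V : T.extClosedDown (Sc ∩ Zc) Vc

/-- A right mutation double `(S, Z)`: conditions (MT1), (RM2) and (RM3) (with `V := I`). -/
structure IsRightMutationDouble (Sc Zc : Set C) : Prop where
  sumS : ClosedSummands C Sc
  sumZ : ClosedSummands C Zc
  strong_contra : T.StronglyContraFinite (Sc ∩ Zc) Zc
  strong_cov : T.StronglyCovFinite (Sc ∩ Zc) Zc
  /-- (RM2): `E^I(S, Z) = 0` -/
  rm2₁ : T.vanishUp (Sc ∩ Zc) Sc Zc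
  /-- (RM2): `E_I(S, Z⟨-1⟩) = 0` -/
  rm2₂ : T.vanishDown (Sc ∩ Zc) Sc (T.shiftMinus (Sc ∩ Zc) Zc)
  /-- (RM3): `Cone_{E^I}(Z, Z) ⊆ Ũ` -/
  rm3₁ : T.coneRel (fun _ _ δ => T.memUp (Sc ∩ Zc) δ) Zc Zc ⊆ T.Utilde (Sc ∩ Zc) Sc Zc
  /-- (RM3): `S` is closed under `E^I`-extensions -/
  rm3_S : T.extClosedUp (Sc ∩ Zc) Sc
  /-- (RM3): `Z` is closed under `E^I`-extensions -/
  rm3_Z : T.extClosedUp (Sc ∩ Zc) Zc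

end ETStruct


namespace S19
open ETStruct

variable {T : ETStruct C}

theorem pull_comp {Z'' Z' Z X : C} (f : Z'' ⟶ Z') (g : Z' ⟶ Z) (δ : T.ext Z X) :
    T.pull (f ≫ g) δ = T.pull f (T.pull g δ) := by
  simp [ETStruct.pull, op_comp]

theorem push_comp {X X' X'' Z : C} (f : X ⟶ X') (g : X' ⟶ X'') (δ : T.ext Z X) :
    T.push (f ≫ g) δ = T.push g (T.push f δ) := by
  simp [ETStruct.push]

theorem pull_id {Z X : C} (δ : T.ext Z X) : T.pull (𝟙 Z) δ = δ := by
  simp [ETStruct.pull]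

theorem push_id {Z X : C} (δ : T.ext Z X) : T.push (𝟙 X) δ = δ := by
  simp [ETStruct.push]

theorem pull_push {Z' Z X X' : C} (f : Z' ⟶ Z) (g : X ⟶ X') (δ : T.ext Z X) :
    T.pull f (T.push g δ) = T.push g (T.pull f δ) := by
  have h := (T.E.map f.op).naturality g
  have h2 := congrArg (fun φ => φ δ) h
  simp only [CategoryTheory.comp_apply] at h2; exact h2

theorem pull_zero {Z' Z X : C} (f : Z' ⟶ Z) : T.pull f (0 : T.ext Z X) = 0 := by
  simp [ETStruct.pull]

theorem push_zero {Z X X' : C} (g : X ⟶ X') : T.push g (0 : T.ext Z X) = 0 := by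
  simp [ETStruct.push]

theorem pull_sub {Z' Z X : C} (f g : Z' ⟶ Z) (δ : T.ext Z X) :
    T.pull (f - g) δ = T.pull f δ - T.pull g δ := by
  letI := T.additive_op
  have hop : (f - g).op = f.op - g.op := rfl
  simp only [ETStruct.pull, hop, Functor.map_sub, NatTrans.app_sub]
  rfl

theorem push_sub {Z X X' : C} (f g : X ⟶ X') (δ : T.ext Z X) :
    T.push (f - g) δ = T.push f δ - T.push g δ := by
  letI := T.additive (op Z)
  simp only [ETStruct.push, Functor.map_sub]
  rfl

end S19

namespace S19
open ETStruct CategoryTheory.Quotient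

/-- Chosen approximation data for an object. -/
structure AD (T : ETStruct C) (I : Set C) (X : C) where
  Iobj : C
  hI : Iobj ∈ I
  i : X ⟶ Iobj
  approx : LeftApprox C I i
  Z : C
  p : Iobj ⟶ Z
  lam : T.ext Z X
  hconf : T.conf i p lam

variable {T : ETStruct C} {I Xc : Set C}

theorem ad_exists (hcov : T.StronglyCovFinite I Xc) (X : ObjectProperty.FullSubcategory (· ∈ Xc)) :
    ∃ _ : AD T I X.obj, True := by
  obtain ⟨W, hW, i, happ, Z, p, δ, hconf⟩ := hcov X.property
  exact ⟨⟨W, hW, i, happ, Z, p, δ, hconf⟩, trivial⟩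

noncomputable def ad (hcov : T.StronglyCovFinite I Xc) (X : ObjectProperty.FullSubcategory (· ∈ Xc)) :
    AD T I X.obj := (ad_exists hcov X).choose

variable (hcov : T.StronglyCovFinite I Xc)

theorem push_zero_iff' {X Y Z : C} {f : X ⟶ Y} {g : Y ⟶ Z} {δ : T.ext Z X}
    (h : T.conf f g δ) {W : C} (k : X ⟶ W) :
    T.push k δ = 0 ↔ ∃ l : Y ⟶ W, f ≫ l = k := T.push_zero_iff h k

theorem pull_zero_iff' {X Y Z : C} {f : X ⟶ Y} {g : Y ⟶ Z} {δ : T.ext Z X}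
    (h : T.conf f g δ) {W : C} (k : W ⟶ Z) :
    T.pull k δ = 0 ↔ ∃ l : W ⟶ Y, l ≫ g = k := T.pull_zero_iff h k

theorem memUp_lam (X : ObjectProperty.FullSubcategory (· ∈ Xc)) : T.memUp I (ad hcov X).lam := by
  intro W hW g
  obtain ⟨h, hh⟩ := (ad hcov X).approx hW g
  exact (push_zero_iff' (ad hcov X).hconf g).mpr ⟨h, hh⟩

theorem memUp_pull {Z' Z X : C} (f : Z' ⟶ Z) {δ : T.ext Z X} (h : T.memUp I δ) :
    T.memUp I (T.pull f δ) := by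
  intro W hW g
  rw [← pull_push, h hW g, pull_zero]

theorem mem_shiftPlus (X : ObjectProperty.FullSubcategory (· ∈ Xc)) : (ad hcov X).Z ∈ T.shiftPlus I Xc :=
  ⟨X.obj, (ad hcov X).Iobj, X.property, (ad hcov X).hI, (ad hcov X).i, (ad hcov X).p,
    (ad hcov X).lam, (ad hcov X).hconf, memUp_lam hcov X⟩

/-- Pulling back an extension with `memUp` along a morphism factoring through `I` kills it. -/
theorem pull_factorsThru (hvan : T.vanishUp I I Xc) {P Q Y₀ : C} (hY : Y₀ ∈ Xc) {d : P ⟶ Q} (hd : FactorsThru I d)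
    (μ : T.ext Q Y₀) (hμ : T.memUp I μ) : T.pull d μ = 0 := by
  obtain ⟨J, hJ, u, v, rfl⟩ := hd
  rw [pull_comp, hvan hJ hY _ (memUp_pull v hμ), pull_zero]

/-- If `pull c lam = 0` then `c` factors through `I`. -/
theorem factorsThru_of_pull_zero {X₀ J Z₀ : C} (hJ : J ∈ I) {i : X₀ ⟶ J} {p : J ⟶ Z₀}
    {lam : T.ext Z₀ X₀} (hconf : T.conf i p lam) {P : C} {c : P ⟶ Z₀}
    (h : T.pull c lam = 0) : FactorsThru I c := by
  obtain ⟨k, hk⟩ := (pull_zero_iff' hconf c).mp h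
  exact ⟨J, hJ, k, p, hk.symm⟩

/-- The defining relation between a morphism and its shift. -/
def Rel {X Y : ObjectProperty.FullSubcategory (· ∈ Xc)} (x : X.obj ⟶ Y.obj)
    (c : (ad hcov X).Z ⟶ (ad hcov Y).Z) : Prop :=
  T.pull c (ad hcov Y).lam = T.push x (ad hcov X).lam

theorem exists_rel {X Y : ObjectProperty.FullSubcategory (· ∈ Xc)} (x : X.obj ⟶ Y.obj) :
    ∃ c, Rel hcov x c := by
  obtain ⟨b, hb⟩ := (ad hcov X).approx (ad hcov Y).hI (x ≫ (ad hcov Y).i)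
  obtain ⟨c, _, hc2⟩ := T.et3 x b (ad hcov X).hconf (ad hcov Y).hconf hb
  exact ⟨c, hc2⟩

theorem rel_unique {X Y : ObjectProperty.FullSubcategory (· ∈ Xc)} {x : X.obj ⟶ Y.obj}
    {c c' : (ad hcov X).Z ⟶ (ad hcov Y).Z} (h : Rel hcov x c) (h' : Rel hcov x c') :
    FactorsThru I (c - c') := by
  refine factorsThru_of_pull_zero (ad hcov Y).hI (ad hcov Y).hconf ?_
  rw [pull_sub, h, h', sub_self]

theorem rel_id (X : ObjectProperty.FullSubcategory (· ∈ Xc)) :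
    Rel hcov (𝟙 X.obj) (𝟙 (ad hcov X).Z) := by
  unfold Rel; rw [pull_id, push_id]

theorem rel_comp {X Y Z : ObjectProperty.FullSubcategory (· ∈ Xc)} {x : X.obj ⟶ Y.obj} {y : Y.obj ⟶ Z.obj}
    {c : (ad hcov X).Z ⟶ (ad hcov Y).Z} {d : (ad hcov Y).Z ⟶ (ad hcov Z).Z}
    (hx : Rel hcov x c) (hy : Rel hcov y d) : Rel hcov (x ≫ y) (c ≫ d) := by
  unfold Rel at *
  rw [pull_comp, hy, pull_push, hx, ← push_comp]

theorem push_lam_factorsThru (X : ObjectProperty.FullSubcategory (· ∈ Xc)) {Y₀ : C} {x : X.obj ⟶ Y₀}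
    (hx : FactorsThru I x) : T.push x (ad hcov X).lam = 0 := by
  obtain ⟨J, hJ, u, v, rfl⟩ := hx
  rw [push_comp, memUp_lam hcov X hJ u, push_zero]

noncomputable def cmor {X Y : ObjectProperty.FullSubcategory (· ∈ Xc)} (x : X ⟶ Y) :
    (ad hcov X).Z ⟶ (ad hcov Y).Z := (exists_rel hcov x.hom).choose

theorem rel_cmor {X Y : ObjectProperty.FullSubcategory (· ∈ Xc)} (x : X ⟶ Y) :
    Rel hcov x.hom (cmor hcov x) := (exists_rel hcov x.hom).choose_spec

/-- The raw shift functor on the full subcategory. -/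
noncomputable def Fraw : ObjectProperty.FullSubcategory (· ∈ Xc) ⥤ IdealQuotient I (T.shiftPlus I Xc) where
  obj X := (functor (idealRel I (T.shiftPlus I Xc))).obj ⟨(ad hcov X).Z, mem_shiftPlus hcov X⟩
  map {X Y} x := (functor (idealRel I (T.shiftPlus I Xc))).map
    (show (⟨(ad hcov X).Z, mem_shiftPlus hcov X⟩ : ObjectProperty.FullSubcategory (· ∈ T.shiftPlus I Xc)) ⟶
      ⟨(ad hcov Y).Z, mem_shiftPlus hcov Y⟩ from ⟨cmor hcov x⟩)
  map_id X := by
    rw [← (functor (idealRel I (T.shiftPlus I Xc))).map_id]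
    exact CategoryTheory.Quotient.sound _ (rel_unique hcov (rel_cmor hcov (𝟙 X)) (rel_id hcov X))
  map_comp {X Y Z} x y := by
    rw [← (functor (idealRel I (T.shiftPlus I Xc))).map_comp]
    exact CategoryTheory.Quotient.sound _ (rel_unique hcov (rel_cmor hcov (x ≫ y))
      (rel_comp hcov (rel_cmor hcov x) (rel_cmor hcov y)))

/-- The induced functor on the ideal quotient. -/
noncomputable def Fq : IdealQuotient I Xc ⥤ IdealQuotient I (T.shiftPlus I Xc) :=
  CategoryTheory.Quotient.lift (idealRel I Xc) (Fraw hcov) (by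
    intro X Y f g h
    apply CategoryTheory.Quotient.sound
    refine rel_unique hcov (x := f.hom) (rel_cmor hcov f) ?_
    unfold Rel
    have h0 : T.push (f.hom - g.hom) (ad hcov X).lam = 0 :=
      push_lam_factorsThru hcov X h
    rw [push_sub] at h0
    rw [rel_cmor hcov g, ← sub_eq_zero]
    -- goal: push g lam - push f lam = 0?  care with order
    rw [sub_eq_zero] at h0 ⊢
    exact h0.symm)

end S19

namespace S19
open ETStruct CategoryTheory.Quotient

variable {T : ETStruct C} {I Xc : Set C}
variable (hcov : T.StronglyCovFinite I Xc)

theorem pull_eq_of_quot_eq (hvan : T.vanishUp I I Xc)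
    {A B : ObjectProperty.FullSubcategory (· ∈ T.shiftPlus I Xc)} {c c' : A ⟶ B}
    (h : (functor (idealRel I (T.shiftPlus I Xc))).map c =
      (functor (idealRel I (T.shiftPlus I Xc))).map c')
    {Y₀ : C} (hY : Y₀ ∈ Xc) (μ : T.ext B.obj Y₀) (hμ : T.memUp I μ) :
    T.pull c.hom μ = T.pull c'.hom μ := by
  have hE : Relation.EqvGen (@HomRel.CompClosure _ _ (idealRel I (T.shiftPlus I Xc)) A B) c c' :=
    Quot.eqvGen_exact h
  clear h
  induction hE with
  | rel x y hxy =>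
    obtain ⟨_, _, a, m₁, m₂, b, hm⟩ := hxy
    have hfac : FactorsThru I ((a.hom ≫ m₁.hom ≫ b.hom) - (a.hom ≫ m₂.hom ≫ b.hom)) := by
      have he : (a.hom ≫ m₁.hom ≫ b.hom) - (a.hom ≫ m₂.hom ≫ b.hom) = a.hom ≫ ((m₁.hom - m₂.hom) ≫ b.hom) := by
        simp [Preadditive.sub_comp, Preadditive.comp_sub]
      rw [he]
      exact factorsThru_comp_left _ (factorsThru_comp_right _ hm)
    have h0 := pull_factorsThru hvan hY hfac μ hμ
    rw [pull_sub] at h0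
    exact sub_eq_zero.mp h0
  | refl _ => rfl
  | symm _ _ _ ih => exact ih.symm
  | trans _ _ _ _ _ ih1 ih2 => exact ih1.trans ih2

theorem fq_faithful (hvan : T.vanishUp I I Xc) : (Fq hcov).Faithful := by
  constructor
  intro X' Y' a b h
  obtain ⟨X⟩ := X'; obtain ⟨Y⟩ := Y'
  obtain ⟨f⟩ := a; obtain ⟨g⟩ := b
  have h' : (functor (idealRel I (T.shiftPlus I Xc))).map
      (show (⟨(ad hcov X).Z, mem_shiftPlus hcov X⟩ : ObjectProperty.FullSubcategory (· ∈ T.shiftPlus I Xc)) ⟶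
        ⟨(ad hcov Y).Z, mem_shiftPlus hcov Y⟩ from ⟨cmor hcov f⟩) =
      (functor (idealRel I (T.shiftPlus I Xc))).map
      (show (⟨(ad hcov X).Z, mem_shiftPlus hcov X⟩ : ObjectProperty.FullSubcategory (· ∈ T.shiftPlus I Xc)) ⟶
        ⟨(ad hcov Y).Z, mem_shiftPlus hcov Y⟩ from ⟨cmor hcov g⟩) := h
  have hpull : T.pull (cmor hcov f) (ad hcov Y).lam = T.pull (cmor hcov g) (ad hcov Y).lam :=
    pull_eq_of_quot_eq hvan h' Y.property (ad hcov Y).lam (memUp_lam hcov Y)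
  have h0 : T.push (f.hom - g.hom) (ad hcov X).lam = 0 := by
    rw [push_sub, ← rel_cmor hcov f, ← rel_cmor hcov g, hpull, sub_self]
  obtain ⟨k, hk⟩ := (push_zero_iff' (ad hcov X).hconf _).mp h0
  exact CategoryTheory.Quotient.sound _
    ⟨(ad hcov X).Iobj, (ad hcov X).hI, (ad hcov X).i, k, hk.symm⟩

theorem fq_full (hvan : T.vanishUp I I Xc) : (Fq hcov).Full := by
  constructor
  intro X' Y' z
  obtain ⟨X⟩ := X'; obtain ⟨Y⟩ := Y'
  obtain ⟨z⟩ := z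
  let z₀ : (ad hcov X).Z ⟶ (ad hcov Y).Z := z.hom
  have h0 : T.pull ((ad hcov X).p ≫ z₀) (ad hcov Y).lam = 0 := by
    rw [pull_comp]
    exact hvan (ad hcov X).hI Y.property _ (memUp_pull _ (memUp_pull z₀ (memUp_lam hcov Y)))
  obtain ⟨b, hb⟩ := (pull_zero_iff' (ad hcov Y).hconf _).mp h0
  obtain ⟨a, ha1, ha2⟩ := T.et3op b z₀ (ad hcov X).hconf (ad hcov Y).hconf hb.symm
  refine ⟨(functor (idealRel I Xc)).map (show X ⟶ Y from ⟨a⟩), ?_⟩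
  show (functor (idealRel I (T.shiftPlus I Xc))).map
      (show (⟨(ad hcov X).Z, mem_shiftPlus hcov X⟩ : ObjectProperty.FullSubcategory (· ∈ T.shiftPlus I Xc)) ⟶
        ⟨(ad hcov Y).Z, mem_shiftPlus hcov Y⟩ from ⟨cmor hcov ⟨a⟩⟩) = (functor (idealRel I (T.shiftPlus I Xc))).map z
  exact CategoryTheory.Quotient.sound _ (rel_unique hcov (rel_cmor hcov ⟨a⟩) ha2)

theorem cone_iso (hvan : T.vanishUp I I Xc) (X : ObjectProperty.FullSubcategory (· ∈ Xc)) {J W₀ : C}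
    (hJ : J ∈ I) (f : X.obj ⟶ J) (g : J ⟶ W₀) (δ : T.ext W₀ X.obj) (hconf : T.conf f g δ)
    (hmem : T.memUp I δ) (hW : W₀ ∈ T.shiftPlus I Xc) :
    Nonempty ((functor (idealRel I (T.shiftPlus I Xc))).obj
        ⟨(ad hcov X).Z, mem_shiftPlus hcov X⟩ ≅
      (functor (idealRel I (T.shiftPlus I Xc))).obj ⟨W₀, hW⟩) := by
  obtain ⟨b, hb⟩ := (ad hcov X).approx hJ f
  obtain ⟨c, hc1, hc2⟩ := T.et3 (𝟙 X.obj) b (ad hcov X).hconf hconf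
    (by rw [hb, Category.id_comp])
  obtain ⟨b', hb'⟩ := (push_zero_iff' hconf (ad hcov X).i).mp (hmem (ad hcov X).hI _)
  obtain ⟨c', hc1', hc2'⟩ := T.et3 (𝟙 X.obj) b' hconf (ad hcov X).hconf
    (by rw [hb', Category.id_comp])
  have hpc : T.pull c δ = (ad hcov X).lam := by
    have h1 : T.pull c δ = T.push (𝟙 X.obj) (ad hcov X).lam := hc2
    rw [h1, push_id]
  have hpc' : T.pull c' (ad hcov X).lam = δ := by
    have h1 : T.pull c' (ad hcov X).lam = T.push (𝟙 X.obj) δ := hc2'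
    rw [h1, push_id]
  have hcc' : T.pull (c ≫ c' - 𝟙 (ad hcov X).Z) (ad hcov X).lam = 0 := by
    rw [pull_sub, pull_comp, pull_id, hpc', hpc, sub_self]
  have hc'c : T.pull (c' ≫ c - 𝟙 W₀) δ = 0 := by
    rw [pull_sub, pull_comp, pull_id, hpc, hpc', sub_self]
  let Zobj : ObjectProperty.FullSubcategory (· ∈ T.shiftPlus I Xc) := ⟨(ad hcov X).Z, mem_shiftPlus hcov X⟩
  let Wobj : ObjectProperty.FullSubcategory (· ∈ T.shiftPlus I Xc) := ⟨W₀, hW⟩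
  refine ⟨⟨(functor (idealRel I (T.shiftPlus I Xc))).map (X := Zobj) (Y := Wobj) ⟨c⟩,
    (functor (idealRel I (T.shiftPlus I Xc))).map (X := Wobj) (Y := Zobj) ⟨c'⟩, ?_, ?_⟩⟩
  · exact CategoryTheory.Quotient.sound _
      (factorsThru_of_pull_zero (ad hcov X).hI (ad hcov X).hconf hcc')
  · exact CategoryTheory.Quotient.sound _ (factorsThru_of_pull_zero hJ hconf hc'c)

theorem fq_essSurj (hvan : T.vanishUp I I Xc) : (Fq hcov).EssSurj := by
  constructor
  intro W'
  obtain ⟨W⟩ := W'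
  obtain ⟨W₀, hW₀⟩ := W
  have hW₀' := hW₀
  obtain ⟨X₀, J, hX₀, hJ, f, g, δ, hconf, hmem⟩ := hW₀'
  obtain ⟨iso⟩ := cone_iso hcov hvan ⟨X₀, hX₀⟩ hJ f g δ hconf hmem hW₀
  exact ⟨(functor (idealRel I Xc)).obj ⟨X₀, hX₀⟩, ⟨iso⟩⟩

end S19

open ETStruct in
/-- If `I ⊆ X` is strongly covariantly finite and `E^I(I, X) = 0`,
then `⟨1⟩ : X/[I] ⥤ X⟨1⟩/[I]` is an equivalence. -/
theorem statement19 (T : ETStruct C) (I Xc : Set C) (hIX : I ⊆ Xc)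
    (hcov : T.StronglyCovFinite I Xc)
    (hvan : T.vanishUp I I Xc) :
    ∃ F : IdealQuotient I Xc ⥤ IdealQuotient I (T.shiftPlus I Xc),
      F.IsEquivalence ∧
      -- `F` sends an object `X` to the cone of a left `I`-approximation inflation of `X`
      ∀ (X : ObjectProperty.FullSubcategory (· ∈ Xc)) (IX : C) (_ : IX ∈ I) (i : X.obj ⟶ IX)
        (_ : LeftApprox C I i) (W : C) (p : IX ⟶ W) (lam : T.ext W X.obj)
        (_ : T.conf i p lam) (_ : T.memUp I lam) (hW : W ∈ T.shiftPlus I Xc),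
        Nonempty (F.obj ((CategoryTheory.Quotient.functor (idealRel I Xc)).obj X) ≅
          (CategoryTheory.Quotient.functor (idealRel I (T.shiftPlus I Xc))).obj ⟨W, hW⟩) := by
  refine ⟨S19.Fq hcov, ⟨S19.fq_faithful hcov hvan, S19.fq_full hcov hvan,
    S19.fq_essSurj hcov hvan⟩, ?_⟩
  intro X IX hIXm i happ W p lam hconf hmem hW
  exact S19.cone_iso hcov hvan X hIXm i p lam hconf hmem hW
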